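/- Let f, g : [0,1] → [a,b] be integrable functions with vertical-shift-invariant L₁ distance r = D₁↕(f,g) > 0. Then L₁(f̂, ĝ) ≤ (2 - r/(b-a)) · r, where f̂ and ĝ are the mean-reductions of f and g. -/

import Mathlib

open MeasureTheory

lemma keylem (M r e S p t s : ℝ) (hM : 0 < M) (hr0 : 0 < r) (hrM : r ≤ M) (he : 0 < e)
    (her : e ≤ r)
    (ht0 : 0 ≤ t) (htp : t ≤ p) (hp1 : r ≤ p) (hp2 : p < r + e)
    (hs1 : r ≤ s) (hs2 : s ≤ 2*M - r)
    (hS : S * (s + t) ≤ s * p + t * s) :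
    S ≤ (2 - r/M) * r + 2*e := by
  have hs0 : 0 < s := lt_of_lt_of_le hr0 hs1
  have hst : 0 < s + t := by linarith
  have hq1 : 0 ≤ r*(2*M - r) := mul_nonneg hr0.le (by linarith)
  have hq2 : 0 ≤ e*M := mul_nonneg he.le hM.le
  have hq3 : 0 ≤ r*(M - r) := mul_nonneg hr0.le (by linarith)
  have poly : (s*p + t*s)*M ≤ (2*r*M - r^2 + 2*e*M)*(s+t) := by
    have hA : 0 ≤ s*M*(r+e-p) := mul_nonneg (mul_nonneg hs0.le hM.le) (by linarith)
    rcases le_or_gt (t*M) (r*M + e*M - r^2) with hc | hc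
    · have hB : 0 ≤ s*(r*M + e*M - r^2 - t*M) := mul_nonneg hs0.le (by linarith)
      have hC : 0 ≤ t*(2*r*M - r^2 + 2*e*M) := mul_nonneg ht0 (by linarith)
      linarith [hA, hB, hC]
    · have hD : 0 ≤ (2*M - r - s) * (t*M - r*M - e*M + r^2) :=
        mul_nonneg (by linarith) (by linarith)
      rcases le_or_gt (-2*M^2 + 3*r*M - r^2 + 2*e*M) 0 with hc2 | hc2
      · have htre : t ≤ r + e := le_trans htp hp2.le
        have hE : 0 ≤ (r + e - t) * (2*M^2 - 3*r*M + r^2 - 2*e*M) :=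
          mul_nonneg (by linarith) (by linarith)
        have hq4 : 0 ≤ e*r := mul_nonneg he.le hr0.le
        have hq5 : 0 ≤ e*(4*r*M - r^2 + 2*e*M) := by
          have : 0 ≤ e*(r*(2*M-r)) := mul_nonneg he.le hq1
          have h2 : 0 ≤ e*(2*r*M) := mul_nonneg he.le (by positivity)
          have h3 : 0 ≤ e*(2*e*M) := mul_nonneg he.le (by positivity)
          nlinarith [this, h2, h3]
        linarith [hA, hD, hE, hq5]
      · have hG : 0 ≤ t * (-2*M^2 + 3*r*M - r^2 + 2*e*M) := mul_nonneg ht0 hc2.le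
        have hH : 0 ≤ (2*M - r)*(r*M + e*M - r^2) := by
          have : (0:ℝ) ≤ r*(M-r) + e*M := by linarith
          exact mul_nonneg (by linarith) (by linarith)
        linarith [hA, hD, hG, hH]
  have h1 : S ≤ (s*p + t*s)/(s+t) := (le_div_iff₀ hst).mpr hS
  have h2 : (s*p + t*s)/(s+t) ≤ (2*r*M - r^2 + 2*e*M)/M := by
    rw [div_le_div_iff₀ hst hM]; linarith [poly]
  have h3 : (2*r*M - r^2 + 2*e*M)/M = (2 - r/M) * r + 2*e := by field_simp
  linarith [h1, h2, h3.le]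

theorem stmt2 (a b r : ℝ) (hab : a < b) (f g : ℝ → ℝ)
    (hf : IntegrableOn f (Set.Icc 0 1)) (hg : IntegrableOn g (Set.Icc 0 1))
    (hfr : ∀ x ∈ Set.Icc (0:ℝ) 1, f x ∈ Set.Icc a b)
    (hgr : ∀ x ∈ Set.Icc (0:ℝ) 1, g x ∈ Set.Icc a b)
    (hr : r = ⨅ α : ℝ, ∫ x in Set.Icc (0:ℝ) 1, |f x + α - g x|)
    (hr0 : 0 < r) :
    (∫ x in Set.Icc (0:ℝ) 1,
        |(f x - ∫ t in Set.Icc (0:ℝ) 1, f t) - (g x - ∫ t in Set.Icc (0:ℝ) 1, g t)|) ≤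
      (2 - r / (b - a)) * r := by
  set I : Set ℝ := Set.Icc 0 1 with hI
  set M : ℝ := b - a with hM
  have hM0 : 0 < M := by simp [hM]; linarith
  have hIvol : volume I = 1 := by rw [hI, Real.volume_Icc]; norm_num
  have hImeas : MeasurableSet I := measurableSet_Icc
  have hh : IntegrableOn (fun x => f x - g x) I := hf.sub hg
  have hconst : ∀ c : ℝ, IntegrableOn (fun _ => c) I := fun c =>
    integrableOn_const (by rw [hIvol]; exact ENNReal.one_ne_top)
  have hhc : ∀ c : ℝ, IntegrableOn (fun x => f x - g x + c) I := fun c => hh.add (hconst c)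
  have habs : ∀ c : ℝ, IntegrableOn (fun x => |f x - g x + c|) I := fun c => (hhc c).abs
  set μ : ℝ := (∫ t in I, f t) - (∫ t in I, g t) with hμ
  have hμint : (∫ x in I, (f x - g x)) = μ := integral_sub hf hg
  have hsum : ∀ c : ℝ, (∫ x in I, (f x - g x + c)) = μ + c := by
    intro c
    rw [integral_add hh (hconst c), hμint, setIntegral_const, measureReal_def, hIvol]
    simp
  set φ : ℝ → ℝ := fun c => ∫ x in I, |f x - g x + c| with hφ
  have hrφ : r = ⨅ c : ℝ, φ c := by
    rw [hr]
    exact iInf_congr fun c => integral_congr_ae (.of_forall fun x => by congr 1; ring)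
  have hφ_lb : ∀ c : ℝ, r ≤ φ c := by
    intro c
    rw [hrφ]
    exact ciInf_le ⟨0, by rintro y ⟨c, rfl⟩; exact integral_nonneg fun x => abs_nonneg _⟩ c
  have habsle : ∀ c : ℝ, |μ + c| ≤ φ c := by
    intro c
    rw [← hsum c]
    calc |∫ x in I, (f x - g x + c)| ≤ ∫ x in I, |f x - g x + c| := by
          simpa [Real.norm_eq_abs] using
            norm_integral_le_integral_norm (μ := volume.restrict I) (fun x => f x - g x + c)
      _ = φ c := rfl
  have hφM : φ M = μ + M := by
    rw [hφ]
    calc (∫ x in I, |f x - g x + M|) = ∫ x in I, (f x - g x + M) := by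
          refine setIntegral_congr_fun hImeas fun x hx => abs_of_nonneg ?_
          have h1 := (hfr x hx).1
          have h2 := (hgr x hx).2
          simp only [hM]; linarith
      _ = μ + M := hsum M
  have hφmM : φ (-M) = M - μ := by
    rw [hφ]
    calc (∫ x in I, |f x - g x + (-M)|) = ∫ x in I, (-(f x - g x + (-M))) := by
          refine setIntegral_congr_fun hImeas fun x hx => abs_of_nonpos ?_
          have h1 := (hfr x hx).2
          have h2 := (hgr x hx).1
          simp only [hM]; linarith
      _ = -(μ + (-M)) := by rw [integral_neg, hsum (-M)]
      _ = M - μ := by ring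
  have hrM : r ≤ M := by
    have h1 := hφ_lb M; have h2 := hφ_lb (-M)
    rw [hφM] at h1; rw [hφmM] at h2; linarith
  have hrMμ : r ≤ M + μ := by have := hφ_lb M; rw [hφM] at this; linarith
  have hrMμ' : r ≤ M - μ := by have := hφ_lb (-M); rw [hφmM] at this; linarith
  -- rewrite the goal
  have hgoal : (∫ x in I,
        |(f x - ∫ t in I, f t) - (g x - ∫ t in I, g t)|) = ∫ x in I, |f x - g x - μ| := by
    refine integral_congr_ae (.of_forall fun x => ?_)
    congr 1
    rw [hμ]; ring
  rw [hgoal]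
  set S : ℝ := ∫ x in I, |f x - g x - μ| with hS
  have hSint : IntegrableOn (fun x => |f x - g x - μ|) I := by
    simpa [sub_eq_add_neg] using habs (-μ)
  -- ε-argument
  have main : ∀ ε : ℝ, 0 < ε → S ≤ (2 - r / M) * r + ε := by
    intro ε hε
    set e : ℝ := min (ε / 2) r with he_def
    have he0 : 0 < e := lt_min (by linarith) hr0
    have her : e ≤ r := min_le_right _ _
    have heε : 2 * e ≤ ε := by
      have := min_le_left (ε / 2) r; linarith
    obtain ⟨c, hc⟩ : ∃ c : ℝ, φ c < r + e := exists_lt_of_ciInf_lt (by rw [← hrφ]; linarith)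
    -- clamp c to [-M, M]
    obtain ⟨β, hβe, hβ1, hβ2⟩ : ∃ β : ℝ, φ β < r + e ∧ -M ≤ β ∧ β ≤ M := by
      rcases le_total c M with h1 | h1
      · rcases le_total (-M) c with h2 | h2
        · exact ⟨c, hc, h2, h1⟩
        · refine ⟨-M, ?_, le_refl _, by linarith⟩
          have h3 := habsle c
          have h4 := neg_le_abs (μ + c)
          rw [hφmM]; linarith
      · refine ⟨M, ?_, by linarith, le_refl _⟩
        have h3 := habsle c
        have h4 := le_abs_self (μ + c)
        rw [hφM]; linarith
    have hβp := hφ_lb β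
    have hβabs := habsle β
    rcases le_total β (-μ) with hb | hb
    · -- case β ≤ -μ : use s = M + μ, t = -μ - β
      have hpt : ∀ x ∈ I, (M - β) * |f x - g x - μ| ≤
          (M + μ) * |f x - g x + β| + (-μ - β) * |f x - g x + M| := by
        intro x hx
        have e1 : (M - β) * |f x - g x - μ| =
            |(M + μ) * (f x - g x + β) + (-μ - β) * (f x - g x + M)| := by
          rw [show (M + μ) * (f x - g x + β) + (-μ - β) * (f x - g x + M)
              = (M - β) * (f x - g x - μ) by ring, abs_mul,
            abs_of_nonneg (by linarith : (0:ℝ) ≤ M - β)]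
        rw [e1]
        calc |(M + μ) * (f x - g x + β) + (-μ - β) * (f x - g x + M)|
            ≤ |(M + μ) * (f x - g x + β)| + |(-μ - β) * (f x - g x + M)| := abs_add_le _ _
          _ = (M + μ) * |f x - g x + β| + (-μ - β) * |f x - g x + M| := by
              rw [abs_mul, abs_mul, abs_of_nonneg (by linarith : (0:ℝ) ≤ M + μ),
                abs_of_nonneg (by linarith : (0:ℝ) ≤ -μ - β)]
      have hmono : (∫ x in I, (M - β) * |f x - g x - μ|) ≤
          ∫ x in I, ((M + μ) * |f x - g x + β| + (-μ - β) * |f x - g x + M|) :=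
        setIntegral_mono_on (hSint.const_mul _)
          (((habs β).const_mul _).add ((habs M).const_mul _)) hImeas hpt
      have hint1 : (∫ x in I, (M - β) * |f x - g x - μ|) = (M - β) * S := by
        rw [integral_const_mul _ _]
      have hint2 : (∫ x in I, ((M + μ) * |f x - g x + β| + (-μ - β) * |f x - g x + M|))
          = (M + μ) * φ β + (-μ - β) * (μ + M) := by
        rw [integral_add ((habs β).const_mul _) ((habs M).const_mul _),
          integral_const_mul _ _, integral_const_mul _ _]
        have : (∫ x in I, |f x - g x + M|) = μ + M := hφM
        rw [this]
      have hkey : S ≤ (2 - r / M) * r + 2 * e := by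
        refine keylem M r e S (φ β) (-μ - β) (M + μ) hM0 hr0 hrM he0 her
          (by linarith) ?_ hβp hβe hrMμ (by linarith) ?_
        · have h4 := neg_le_abs (μ + β); linarith
        · have : S * ((M + μ) + (-μ - β)) = (M - β) * S := by ring
          rw [this]
          have h5 : (M + μ) * φ β + (-μ - β) * (μ + M)
              = (M + μ) * φ β + (-μ - β) * (M + μ) := by ring
          linarith [hmono, hint1.le, hint1.ge, hint2.le, hint2.ge]
      linarith
    · -- case -μ ≤ β : use s = M - μ, t = μ + β
      have hpt : ∀ x ∈ I, (M + β) * |f x - g x - μ| ≤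
          (M - μ) * |f x - g x + β| + (μ + β) * |f x - g x + (-M)| := by
        intro x hx
        have e1 : (M + β) * |f x - g x - μ| =
            |(M - μ) * (f x - g x + β) + (μ + β) * (f x - g x + (-M))| := by
          rw [show (M - μ) * (f x - g x + β) + (μ + β) * (f x - g x + (-M))
              = (M + β) * (f x - g x - μ) by ring, abs_mul,
            abs_of_nonneg (by linarith : (0:ℝ) ≤ M + β)]
        rw [e1]
        calc |(M - μ) * (f x - g x + β) + (μ + β) * (f x - g x + (-M))|
            ≤ |(M - μ) * (f x - g x + β)| + |(μ + β) * (f x - g x + (-M))| := abs_add_le _ _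
          _ = (M - μ) * |f x - g x + β| + (μ + β) * |f x - g x + (-M)| := by
              rw [abs_mul, abs_mul, abs_of_nonneg (by linarith : (0:ℝ) ≤ M - μ),
                abs_of_nonneg (by linarith : (0:ℝ) ≤ μ + β)]
      have hmono : (∫ x in I, (M + β) * |f x - g x - μ|) ≤
          ∫ x in I, ((M - μ) * |f x - g x + β| + (μ + β) * |f x - g x + (-M)|) :=
        setIntegral_mono_on (hSint.const_mul _)
          (((habs β).const_mul _).add ((habs (-M)).const_mul _)) hImeas hpt
      have hint1 : (∫ x in I, (M + β) * |f x - g x - μ|) = (M + β) * S := by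
        rw [integral_const_mul _ _]
      have hint2 : (∫ x in I, ((M - μ) * |f x - g x + β| + (μ + β) * |f x - g x + (-M)|))
          = (M - μ) * φ β + (μ + β) * (M - μ) := by
        rw [integral_add ((habs β).const_mul _) ((habs (-M)).const_mul _),
          integral_const_mul _ _, integral_const_mul _ _]
        have : (∫ x in I, |f x - g x + (-M)|) = M - μ := hφmM
        rw [this]
      have hkey : S ≤ (2 - r / M) * r + 2 * e := by
        refine keylem M r e S (φ β) (μ + β) (M - μ) hM0 hr0 hrM he0 her
          (by linarith) ?_ hβp hβe hrMμ' (by linarith) ?_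
        · have h4 := le_abs_self (μ + β); linarith
        · have : S * ((M - μ) + (μ + β)) = (M + β) * S := by ring
          rw [this]
          linarith [hmono, hint1.le, hint1.ge, hint2.le, hint2.ge]
      linarith
  exact le_of_forall_pos_le_add main
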